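/- For all r ∈ [0,1] and α ∈ (0,1) ∪ (1,∞): if α ≤ 2 then (r - r^α)/(α-1) ≥ r - r², and if α > 2 then (r - r^α)/(α-1) ≤ r - r². -/
import Mathlib

/-- For r ∈ [0,1] and α ∈ (0,1) ∪ (1,∞): if α ≤ 2 then
(r - r^α)/(α-1) ≥ r - r², and if α > 2 then (r - r^α)/(α-1) ≤ r - r². -/
theorem ccte_integrand_vs_quadratic (r : ℝ) (hr : r ∈ Set.Icc (0:ℝ) 1)
    (α : ℝ) (hα : α ∈ Set.Ioo (0:ℝ) 1 ∪ Set.Ioi (1:ℝ)) :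
    (α ≤ 2 → r - r ^ 2 ≤ (r - r ^ α) / (α - 1)) ∧
      (2 < α → (r - r ^ α) / (α - 1) ≤ r - r ^ 2) := by
  obtain ⟨hr0, hr1⟩ := hr
  have hαpos : 0 < α := by rcases hα with h | h; exact h.1; linarith [h.out]
  rcases eq_or_lt_of_le hr0 with rfl | hrpos
  · rw [Real.zero_rpow hαpos.ne', show (0:ℝ)^2 = 0 by norm_num]
    simp
  -- r > 0 case
  have hs : -1 ≤ r - 1 := by linarith
  have hrw : r ^ α = r * r ^ (α - 1) := by
    have h := Real.rpow_add hrpos 1 (α - 1)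
    rw [Real.rpow_one] at h
    rw [show α = 1 + (α - 1) by ring, h]
    norm_num
  have h1r : r = 1 + (r - 1) := by ring
  constructor
  · intro hα2
    rcases hα with ⟨hα0, hα1⟩ | hα1'
    · -- α ∈ (0,1): α - 1 < 0
      have hneg : α - 1 < 0 := by linarith
      rw [le_div_iff_of_neg hneg]
      -- need r - r^α ≤ (r - r^2) * (α - 1), i.e. r^(α-1) ≥ 1 + (1-α)(1-r)
      have key : 1 + (1 - α) * (1 - r) ≤ r ^ (α - 1) := by
        have hb : r ^ (1 - α) ≤ 1 + (1 - α) * (r - 1) := by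
          have := rpow_one_add_le_one_add_mul_self hs (by linarith : (0:ℝ) ≤ 1 - α)
            (by linarith : 1 - α ≤ 1)
          rwa [← h1r] at this
        have hprod : r ^ (1 - α) * (1 + (1 - α) * (1 - r)) ≤ 1 := by
          calc r ^ (1 - α) * (1 + (1 - α) * (1 - r))
              ≤ (1 + (1 - α) * (r - 1)) * (1 + (1 - α) * (1 - r)) := by
                apply mul_le_mul_of_nonneg_right hb
                nlinarith
            _ = 1 - ((1 - α) * (1 - r))^2 := by ring
            _ ≤ 1 := by nlinarith
        have hrp : 0 < r ^ (1 - α) := Real.rpow_pos_of_pos hrpos _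
        have hinv : r ^ (α - 1) = 1 / r ^ (1 - α) := by
          rw [one_div, ← Real.rpow_neg hrpos.le, neg_sub]
        rw [hinv, le_div_iff₀ hrp]
        rwa [mul_comm] at hprod
      have key2 : r * (1 + (1 - α) * (1 - r)) ≤ r ^ α := by
        rw [hrw]
        exact mul_le_mul_of_nonneg_left key hrpos.le
      nlinarith [key2]
    · -- α ∈ (1,2]
      have hpos : 0 < α - 1 := by linarith [hα1'.out]
      rw [le_div_iff₀ hpos]
      have hb : r ^ (α - 1) ≤ 1 + (α - 1) * (r - 1) := by
        have := rpow_one_add_le_one_add_mul_self hs (by linarith : (0:ℝ) ≤ α - 1)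
          (by linarith : α - 1 ≤ 1)
        rwa [← h1r] at this
      have : r ^ α ≤ r * (1 + (α - 1) * (r - 1)) := by
        rw [hrw]; exact mul_le_mul_of_nonneg_left hb hrpos.le
      nlinarith
  · intro hα2
    have hpos : 0 < α - 1 := by linarith
    rw [div_le_iff₀ hpos]
    have hb : 1 + (α - 1) * (r - 1) ≤ r ^ (α - 1) := by
      have := one_add_mul_self_le_rpow_one_add hs (by linarith : (1:ℝ) ≤ α - 1)
      rwa [← h1r] at this
    have : r * (1 + (α - 1) * (r - 1)) ≤ r ^ α := by
      rw [hrw]; exact mul_le_mul_of_nonneg_left hb hrpos.le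
    nlinarith
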